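/- Uniqueness of a random utility representation is a property of its support: if ν is the unique distribution rationalizing its induced system of choice probabilities, and ν' is any distribution over linear orders with the same support as ν, then ν' is the unique distribution rationalizing its own induced system of choice probabilities. -/
import Mathlib


open Finset
open scoped Classical

/-- A linear order on a finite set `α`, encoded as a ranking bijection to `Fin (card α)`;
higher value means more preferred. -/
abbrev RankOrd (α : Type*) [Fintype α] := α ≃ Fin (Fintype.card α)

variable {α : Type*} [Fintype α] [DecidableEq α]

/-- `ν` is a probability distribution over linear orders. -/
def IsDist [Fintype α] (ν : RankOrd α → ℝ) : Prop :=
  (∀ π, 0 ≤ ν π) ∧ ∑ π : RankOrd α, ν π = 1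

/-- The choice probabilities induced by a distribution over linear orders. -/
noncomputable def choiceProb (ν : RankOrd α → ℝ) (A : Finset α) (x : α) : ℝ :=
  ∑ π : RankOrd α, if ∀ y ∈ A, y ≠ x → (π y : ℕ) < (π x : ℕ) then ν π else 0

/-- `ν` rationalizes the system of choice probabilities `P`. -/
def Rationalizes (ν : RankOrd α → ℝ) (P : Finset α → α → ℝ) : Prop :=
  IsDist ν ∧ ∀ A : Finset α, A.Nonempty → ∀ x ∈ A, P A x = choiceProb ν A x

/-- The Block–Marschak polynomial `q(x,A)` of a system of choice probabilities `P`. -/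
noncomputable def bm (P : Finset α → α → ℝ) (x : α) (A : Finset α) : ℝ :=
  ∑ A' ∈ Finset.univ.powerset.filter (fun A' => A ⊆ A'),
    (-1 : ℝ) ^ (A' \ A).card * P A' x

/-- A path: a maximal chain `X = A_0 ⊋ A_1 ⊋ ⋯ ⊋ A_{|X|} = ∅` decreasing by one element. -/
def IsPath (ρ : ℕ → Finset α) : Prop :=
  ρ 0 = Finset.univ ∧ ρ (Fintype.card α) = ∅ ∧
    ∀ i < Fintype.card α, ρ (i + 1) ⊆ ρ i ∧ (ρ i \ ρ (i + 1)).card = 1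

/-- A supported path: all Block–Marschak edge weights along it are strictly positive. -/
def SupportedPath (P : Finset α → α → ℝ) (ρ : ℕ → Finset α) : Prop :=
  IsPath ρ ∧ ∀ i < Fintype.card α, ∀ x ∈ ρ i \ ρ (i + 1), 0 < bm P x (ρ i)

/-- Two paths are branching: they agree on a consecutive block of nodes
`{i,…,j} ⊆ {1,…,|X|-1}` while differing at positions `i-1` and `j+1`. -/
def BranchingPair (ρ ρ' : ℕ → Finset α) : Prop :=
  ∃ i j, 1 ≤ i ∧ i ≤ j ∧ j ≤ Fintype.card α - 1 ∧
    ρ (i - 1) ≠ ρ' (i - 1) ∧ ρ (j + 1) ≠ ρ' (j + 1) ∧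
    ∀ m, i ≤ m → m ≤ j → ρ m = ρ' m

/-- The path associated with the linear order `π`: `A_i` is `X` minus the top `i` elements. -/
def pathOf (π : RankOrd α) : ℕ → Finset α :=
  fun i => Finset.univ.filter (fun w => (π w : ℕ) < Fintype.card α - i)

/-- The weak upper contour set of `x` according to `π`. -/
def upper (π : RankOrd α) (x : α) : Finset α :=
  Finset.univ.filter (fun w => (π x : ℕ) ≤ (π w : ℕ))

/-- `π ∈ M_{x,A}`: `π` ranks `X \ A` above `x` and `x` above `A \ {x}`. -/
def inM (π : RankOrd α) (x : α) (A : Finset α) : Prop :=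
  (∀ z, z ∉ A → (π x : ℕ) < (π z : ℕ)) ∧ ∀ y ∈ A, y ≠ x → (π y : ℕ) < (π x : ℕ)

/-- Uniqueness is a property of the support: if `ν` is the unique rationalization of its
induced choice probabilities, so is any distribution `ν'` with the same support. -/
theorem unique_of_same_support {α : Type*} [Fintype α] [DecidableEq α]
    (ν : RankOrd α → ℝ) (hν : IsDist ν)
    (huniq : ∀ ν'' : RankOrd α → ℝ, IsDist ν'' →
      (∀ A : Finset α, ∀ x ∈ A, choiceProb ν'' A x = choiceProb ν A x) → ν'' = ν)
    (ν' : RankOrd α → ℝ) (hν' : IsDist ν')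
    (hsupp : ∀ π : RankOrd α, 0 < ν π ↔ 0 < ν' π) :
    ∀ ν'' : RankOrd α → ℝ, IsDist ν'' →
      (∀ A : Finset α, ∀ x ∈ A, choiceProb ν'' A x = choiceProb ν' A x) → ν'' = ν' := by
  intro nu'' hdist hP
  set d : RankOrd α → ℝ := fun π => nu'' π - ν' π with hd
  have hsumd : ∑ π : RankOrd α, d π = 0 := by
    simp only [hd, Finset.sum_sub_distrib, hdist.2, hν'.2, sub_self]
  have hker : ∀ A : Finset α, ∀ x ∈ A,
      (∑ π : RankOrd α,
        if (∀ y ∈ A, y ≠ x → (π y : ℕ) < (π x : ℕ)) then d π else 0) = 0 := by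
    intro A x hx
    have h := hP A x hx
    simp only [choiceProb] at h
    have : (∑ π : RankOrd α,
        if (∀ y ∈ A, y ≠ x → (π y : ℕ) < (π x : ℕ)) then d π else 0)
        = (∑ π : RankOrd α,
            if (∀ y ∈ A, y ≠ x → (π y : ℕ) < (π x : ℕ)) then nu'' π else 0)
          - (∑ π : RankOrd α,
            if (∀ y ∈ A, y ≠ x → (π y : ℕ) < (π x : ℕ)) then ν' π else 0) := by
      rw [← Finset.sum_sub_distrib]
      refine Finset.sum_congr rfl fun π _ => ?_
      split <;> simp [hd]
    rw [this, h, sub_self]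
  have hneg : ∀ π : RankOrd α, d π < 0 → 0 < ν π := by
    intro π hπ
    have h1 : 0 ≤ nu'' π := hdist.1 π
    have h2 : 0 < ν' π := by simp only [hd] at hπ; linarith
    exact (hsupp π).mpr h2
  have hzero : ∀ π : RankOrd α, ν π = 0 → 0 ≤ d π := by
    intro π hπ
    have h2 : ν' π = 0 := by
      by_contra hc
      have : 0 < ν' π := lt_of_le_of_ne (hν'.1 π) (Ne.symm hc)
      have := (hsupp π).mpr this
      linarith
    have := hdist.1 π
    simp only [hd, h2]; linarith
  have hdz : ∀ π : RankOrd α, d π = 0 := by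
    by_contra hne
    push_neg at hne
    obtain ⟨π₀, hπ₀⟩ := hne
    -- the set where d is negative is nonempty
    have hSne : (Finset.univ.filter (fun π : RankOrd α => d π < 0)).Nonempty := by
      by_contra hS
      rw [Finset.not_nonempty_iff_eq_empty, Finset.filter_eq_empty_iff] at hS
      have hnn : ∀ π ∈ (Finset.univ : Finset (RankOrd α)), 0 ≤ d π := by
        intro π _
        have := hS (Finset.mem_univ π)
        linarith [not_lt.mp this]
      have := (Finset.sum_eq_zero_iff_of_nonneg hnn).mp hsumd π₀ (Finset.mem_univ π₀)
      exact hπ₀ this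
    set S := Finset.univ.filter (fun π : RankOrd α => d π < 0) with hS
    set ε : ℝ := S.inf' hSne (fun π => ν π / (-(d π))) with hε
    have hmem : ∀ π ∈ S, d π < 0 := by
      intro π hπ; exact (Finset.mem_filter.mp hπ).2
    have hεpos : 0 < ε := by
      rw [hε, Finset.lt_inf'_iff]
      intro π hπ
      exact div_pos (hneg π (hmem π hπ)) (by linarith [hmem π hπ])
    have hbound : ∀ π : RankOrd α, 0 ≤ ν π + ε * d π := by
      intro π
      by_cases hc : d π < 0
      · have hπS : π ∈ S := Finset.mem_filter.mpr ⟨Finset.mem_univ π, hc⟩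
        have hle : ε ≤ ν π / (-(d π)) := Finset.inf'_le _ hπS
        have hpos : (0:ℝ) < -(d π) := by linarith
        have := (le_div_iff₀ hpos).mp hle
        nlinarith
      · have := hν.1 π
        push_neg at hc
        nlinarith
    set ν₀ : RankOrd α → ℝ := fun π => ν π + ε * d π with hν₀
    have hdist₀ : IsDist ν₀ := by
      refine ⟨hbound, ?_⟩
      simp only [hν₀, Finset.sum_add_distrib, ← Finset.mul_sum, hsumd, hν.2, mul_zero,
        add_zero]
    have hcp : ∀ A : Finset α, ∀ x ∈ A, choiceProb ν₀ A x = choiceProb ν A x := by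
      intro A x hx
      simp only [choiceProb, hν₀]
      have hsplit : (∑ π : RankOrd α,
          if (∀ y ∈ A, y ≠ x → (π y : ℕ) < (π x : ℕ)) then ν π + ε * d π else 0)
          = (∑ π : RankOrd α,
              if (∀ y ∈ A, y ≠ x → (π y : ℕ) < (π x : ℕ)) then ν π else 0)
            + ε * (∑ π : RankOrd α,
              if (∀ y ∈ A, y ≠ x → (π y : ℕ) < (π x : ℕ)) then d π else 0) := by
        rw [Finset.mul_sum, ← Finset.sum_add_distrib]
        refine Finset.sum_congr rfl fun π _ => ?_
        split <;> simp
      rw [hsplit, hker A x hx, mul_zero, add_zero]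
    have heq := huniq ν₀ hdist₀ hcp
    have := congrFun heq π₀
    simp only [hν₀] at this
    have : ε * d π₀ = 0 := by linarith
    rcases mul_eq_zero.mp this with h | h
    · linarith
    · exact hπ₀ h
  funext π
  have := hdz π
  simp only [hd] at this
  linarith
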